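/- Let C be a closed convex cone in R^m, Π the projection onto C*, γ > 0, and Θ : R^n → R^m. For any p ∈ C*, u^k, u^{k+1} ∈ R^n, set q^k = Π(p^k + γΘ(u^k)) and p^{k+1} = Π(p^k + γΘ(u^{k+1})). Then ⟨p − q^k, Θ(u^{k+1})⟩ ≤ (1/(2γ))[‖p−p^k‖² − ‖p−p^{k+1}‖²] − (1/(2γ))‖q^k − p^k‖² + (γ/2)‖Θ(u^k) − Θ(u^{k+1})‖². -/

import Mathlib

open scoped RealInnerProductSpace

/-- `P` is the metric projection onto `S`. -/
def IsProjOn {E : Type*} [NormedAddCommGroup E] (S : Set E) (P : E → E) : Prop :=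
  ∀ x, P x ∈ S ∧ ∀ y ∈ S, ‖x - P x‖ ≤ ‖x - y‖

/-- The dual cone `C* = {y : ⟨x, y⟩ ≥ 0 for all x ∈ C}`. -/
def dualCone' {E : Type*} [NormedAddCommGroup E] [InnerProductSpace ℝ E] (C : Set E) : Set E :=
  {y | ∀ x ∈ C, 0 ≤ ⟪x, y⟫}

lemma dualCone'_convex {E : Type*} [NormedAddCommGroup E] [InnerProductSpace ℝ E]
    (C : Set E) : Convex ℝ (dualCone' C) := by
  intro y1 h1 y2 h2 a b ha hb _
  intro x hx
  have e : ⟪x, a • y1 + b • y2⟫ = a * ⟪x, y1⟫ + b * ⟪x, y2⟫ := by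
    rw [inner_add_right, real_inner_smul_right, real_inner_smul_right]
  rw [e]
  have := h1 x hx
  have := h2 x hx
  positivity

/-- variational inequality for a metric projection onto a convex set -/
lemma isProjOn_inner_le {E : Type*} [NormedAddCommGroup E] [InnerProductSpace ℝ E]
    {S : Set E} (hconv : Convex ℝ S) {P : E → E} (hP : IsProjOn S P) (x : E) {y : E}
    (hy : y ∈ S) : ⟪x - P x, y - P x⟫ ≤ 0 := by
  obtain ⟨hPx, hmin⟩ := hP x
  haveI : Nonempty S := ⟨⟨P x, hPx⟩⟩
  have hinf : ‖x - P x‖ = ⨅ w : S, ‖x - w‖ := by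
    refine le_antisymm (le_ciInf fun w => hmin w w.2) ?_
    have hbdd : BddBelow (Set.range fun w : S => ‖x - (w : E)‖) := by
      refine ⟨0, ?_⟩
      rintro _ ⟨w, rfl⟩
      exact norm_nonneg _
    exact ciInf_le hbdd ⟨P x, hPx⟩
  exact (norm_eq_iInf_iff_real_inner_le_zero hconv hPx).1 hinf y hy

theorem stmt14 {n m : ℕ} (C : Set (EuclideanSpace ℝ (Fin m))) (hCne : C.Nonempty)
    (hCclosed : IsClosed C) (hCconv : Convex ℝ C)
    (hCcone : ∀ x ∈ C, ∀ a : ℝ, 0 ≤ a → a • x ∈ C)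
    (Proj : EuclideanSpace ℝ (Fin m) → EuclideanSpace ℝ (Fin m))
    (hProj : IsProjOn (dualCone' C) Proj)
    (γ : ℝ) (hγ : 0 < γ)
    (Θ : EuclideanSpace ℝ (Fin n) → EuclideanSpace ℝ (Fin m))
    (p pk : EuclideanSpace ℝ (Fin m)) (hp : p ∈ dualCone' C)
    (uk uk1 : EuclideanSpace ℝ (Fin n))
    (qk pk1 : EuclideanSpace ℝ (Fin m))
    (hqk : qk = Proj (pk + γ • Θ uk)) (hpk1 : pk1 = Proj (pk + γ • Θ uk1)) :
    ⟪p - qk, Θ uk1⟫ ≤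
      1 / (2 * γ) * (‖p - pk‖ ^ 2 - ‖p - pk1‖ ^ 2) - 1 / (2 * γ) * ‖qk - pk‖ ^ 2 +
        γ / 2 * ‖Θ uk - Θ uk1‖ ^ 2 := by
  have hconv := dualCone'_convex C
  set U : EuclideanSpace ℝ (Fin m) := γ • Θ uk1 with hU
  set V : EuclideanSpace ℝ (Fin m) := γ • Θ uk with hV
  have hqkS : qk ∈ dualCone' C := hqk ▸ (hProj (pk + V)).1
  have hpk1S : pk1 ∈ dualCone' C := hpk1 ▸ (hProj (pk + U)).1
  have I1 : ⟪pk + U - pk1, p - pk1⟫ ≤ 0 := by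
    rw [hpk1]; exact isProjOn_inner_le hconv hProj (pk + U) hp
  have I2 : ⟪pk + V - qk, pk1 - qk⟫ ≤ 0 := by
    rw [hqk]; exact isProjOn_inner_le hconv hProj (pk + V) hpk1S
  have I3 : (0:ℝ) ≤ ‖U - V - (pk1 - qk)‖ ^ 2 := by positivity
  -- main scaled inequality in terms of U, V
  have H : 2 * ⟪p - qk, U⟫ ≤
      ‖p - pk‖ ^ 2 - ‖p - pk1‖ ^ 2 - ‖qk - pk‖ ^ 2 + ‖U - V‖ ^ 2 := by
    simp only [← real_inner_self_eq_norm_sq] at I3 ⊢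
    simp only [inner_sub_left, inner_sub_right, inner_add_left, inner_add_right] at I1 I2 I3 ⊢
    linarith [real_inner_comm p pk, real_inner_comm p pk1, real_inner_comm p qk,
      real_inner_comm p U, real_inner_comm p V, real_inner_comm pk pk1,
      real_inner_comm pk qk, real_inner_comm pk U, real_inner_comm pk V,
      real_inner_comm pk1 qk, real_inner_comm pk1 U, real_inner_comm pk1 V,
      real_inner_comm qk U, real_inner_comm qk V, real_inner_comm U V]
  have hUip : ⟪p - qk, U⟫ = γ * ⟪p - qk, Θ uk1⟫ := real_inner_smul_right _ _ _
  have hUV : ‖U - V‖ ^ 2 = γ ^ 2 * ‖Θ uk - Θ uk1‖ ^ 2 := by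
    have : U - V = (-γ) • (Θ uk - Θ uk1) := by rw [hU, hV]; module
    rw [this, norm_smul]
    simp [mul_pow, sq_abs]
  rw [hUip, hUV] at H
  have h2γ : (0:ℝ) < 2 * γ := by linarith
  rw [show (1 / (2 * γ) * (‖p - pk‖ ^ 2 - ‖p - pk1‖ ^ 2) - 1 / (2 * γ) * ‖qk - pk‖ ^ 2 +
        γ / 2 * ‖Θ uk - Θ uk1‖ ^ 2) =
      (‖p - pk‖ ^ 2 - ‖p - pk1‖ ^ 2 - ‖qk - pk‖ ^ 2 + γ ^ 2 * ‖Θ uk - Θ uk1‖ ^ 2) / (2 * γ)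
    from by field_simp]
  rw [le_div_iff₀ h2γ]
  nlinarith [H]
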